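/- arXiv:2001.05529 — 3 statements merged into one kernel-verified Lean document; each statement's English description precedes it below -/
import Mathlib

section
/- Let Ω_p ⊂ ℝⁿ be a bounded Lipschitz domain, Γ ⊂ ∂Ω_p, ε > 0, and Γ_ε = {y ∈ Ω_p : dist(y, Γ) < ε}. For v ∈ H¹(Ω_p) ∩ C(Ω̄_p) and a test function φ ∈ C(Ω̄_p), under suitable regularity of Γ (e.g. Γ a flat portion of the boundary), (1/ε)∫_{Γ_ε} v φ dx → ∫_Γ (Tv)(Tφ) ds as ε → 0, where T is the trace (restriction) operator. -/
open MeasureTheory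

/-- model case of a flat boundary face. `Ω_p = (0,1) × B` with flat
face `Γ = {0} × B`, and `Γ_ε = (0,ε) × B` its ε-thick envelope.  For `v` in
`H¹ ∩ C` and a continuous test function `φ`,
`(1/ε) ∫_{Γ_ε} v φ dx → ∫_Γ (Tv)(Tφ) ds` as `ε → 0⁺`, where the trace `T` of a
continuous function is its restriction to `Γ`. -/
theorem stmt6 {m : ℕ} (B : Set (Fin m → ℝ)) (hB : MeasurableSet B)
    (hBbd : Bornology.IsBounded B)
    (v φ : ℝ × (Fin m → ℝ) → ℝ)
    (hv : Continuous v) (hφ : Continuous φ)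
    (hv2 : MemLp v 2 (volume.restrict (Set.Ioo (0 : ℝ) 1 ×ˢ B))) :
    Filter.Tendsto
      (fun ε : ℝ => (1 / ε) * ∫ p in Set.Ioo (0 : ℝ) ε ×ˢ B, v p * φ p)
      (nhdsWithin 0 (Set.Ioi 0))
      (nhds (∫ b in B, v (0, b) * φ (0, b))) := by
  set f : ℝ × (Fin m → ℝ) → ℝ := fun p => v p * φ p with hf_def
  have hf : Continuous f := hv.mul hφ
  set I : ℝ := ∫ b in B, f (0, b) with hI_def
  -- compact set containing all relevant points
  have hKc : IsCompact ((Set.Icc (0:ℝ) 1) ×ˢ closure B) :=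
    isCompact_Icc.prod (Metric.isCompact_of_isClosed_isBounded isClosed_closure hBbd.closure)
  -- integrability of continuous functions on bounded measurable subsets
  have hInt : ∀ (g : ℝ × (Fin m → ℝ) → ℝ), Continuous g → ∀ ε : ℝ, ε ≤ 1 →
      IntegrableOn g (Set.Ioo (0:ℝ) ε ×ˢ B) volume := by
    intro g hg ε hε
    have hsub : Set.Ioo (0:ℝ) ε ×ˢ B ⊆ (Set.Icc (0:ℝ) 1) ×ˢ closure B := by
      apply Set.prod_mono
      · intro x hx; exact ⟨le_of_lt hx.1, le_trans (le_of_lt hx.2) hε⟩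
      · exact subset_closure
    exact (hg.continuousOn.integrableOn_compact hKc).mono_set hsub
  -- finiteness of volume of B
  have hBfin : volume B < ⊤ := hBbd.measure_lt_top
  have hBnn : (0:ℝ) ≤ (volume B).toReal := ENNReal.toReal_nonneg
  rw [Metric.tendsto_nhdsWithin_nhds]
  intro δ hδ
  set C : ℝ := (volume B).toReal with hC_def
  set δ' : ℝ := δ / (C + 1) with hδ'_def
  have hδ' : 0 < δ' := div_pos hδ (by linarith)
  -- uniform continuity on the compact set
  have huc := (hKc.uniformContinuousOn_of_continuous hf.continuousOn)
  obtain ⟨η, hη, hη'⟩ := Metric.uniformContinuousOn_iff.mp huc δ' hδ'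
  refine ⟨min η 1, lt_min hη one_pos, ?_⟩
  intro ε hεpos hεlt
  simp only [Set.mem_Ioi] at hεpos
  rw [Real.dist_eq, sub_zero, abs_of_pos hεpos] at hεlt
  have hε1 : ε ≤ 1 := le_of_lt (lt_of_lt_of_le hεlt (min_le_right _ _))
  have hεη : ε < η := lt_of_lt_of_le hεlt (min_le_left _ _)
  -- integrability of the two functions on the slab
  have hIf : IntegrableOn f (Set.Ioo (0:ℝ) ε ×ˢ B) volume := hInt f hf ε hε1
  have hg0 : Continuous (fun p : ℝ × (Fin m → ℝ) => f (0, p.2)) :=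
    hf.comp (continuous_const.prodMk continuous_snd)
  have hIf0 : IntegrableOn (fun p : ℝ × (Fin m → ℝ) => f (0, p.2))
      (Set.Ioo (0:ℝ) ε ×ˢ B) volume := hInt _ hg0 ε hε1
  -- the comparison integral equals ε * I
  have hconst : ∫ p in Set.Ioo (0:ℝ) ε ×ˢ B, f (0, p.2) = ε * I := by
    have h1 : ∫ p in Set.Ioo (0:ℝ) ε ×ˢ B, f (0, p.2)
        = ∫ t in Set.Ioo (0:ℝ) ε, ∫ b in B, f (0, b) := by
      rw [MeasureTheory.Measure.volume_eq_prod] at hIf0 ⊢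
      exact MeasureTheory.setIntegral_prod _ hIf0
    rw [h1, setIntegral_const, measureReal_def, Real.volume_Ioo, sub_zero,
      ENNReal.toReal_ofReal (le_of_lt hεpos), smul_eq_mul, hI_def]
  -- volume of the slab
  have hvol : volume (Set.Ioo (0:ℝ) ε ×ˢ B) = ENNReal.ofReal ε * volume B := by
    rw [MeasureTheory.Measure.volume_eq_prod, Measure.prod_prod, Real.volume_Ioo, sub_zero]
  have hvolfin : volume (Set.Ioo (0:ℝ) ε ×ˢ B) < ⊤ := by
    rw [hvol]; exact ENNReal.mul_lt_top ENNReal.ofReal_lt_top hBfin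
  -- pointwise bound on the difference
  have hbound : ∀ p ∈ Set.Ioo (0:ℝ) ε ×ˢ B, ‖f p - f (0, p.2)‖ ≤ δ' := by
    rintro ⟨t, b⟩ ⟨ht, hb⟩
    have hmem1 : ((t, b) : ℝ × (Fin m → ℝ)) ∈ (Set.Icc (0:ℝ) 1) ×ˢ closure B :=
      ⟨⟨le_of_lt ht.1, le_trans (le_of_lt ht.2) hε1⟩, subset_closure hb⟩
    have hmem2 : ((0, b) : ℝ × (Fin m → ℝ)) ∈ (Set.Icc (0:ℝ) 1) ×ˢ closure B :=
      ⟨⟨le_refl 0, zero_le_one⟩, subset_closure hb⟩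
    have hd : dist ((t, b) : ℝ × (Fin m → ℝ)) (0, b) < η := by
      rw [Prod.dist_eq]
      simp only [dist_self]
      rw [max_eq_left dist_nonneg, Real.dist_eq, sub_zero, abs_of_pos ht.1]
      exact lt_trans ht.2 hεη
    have := hη' _ hmem1 _ hmem2 hd
    rw [Real.dist_eq] at this
    exact le_of_lt this
  -- the bound on the error integral
  have hkey : ‖∫ p in Set.Ioo (0:ℝ) ε ×ˢ B, (f p - f (0, p.2))‖
      ≤ δ' * (ENNReal.ofReal ε * volume B).toReal := by
    rw [← hvol]
    have := norm_setIntegral_le_of_norm_le_const hvolfin hbound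
    rwa [measureReal_def] at this
  rw [integral_sub hIf hIf0, hconst] at hkey
  have htoReal : (ENNReal.ofReal ε * volume B).toReal = ε * C := by
    rw [ENNReal.toReal_mul, ENNReal.toReal_ofReal (le_of_lt hεpos)]
  rw [htoReal] at hkey
  -- conclude
  rw [Real.dist_eq]
  have heq : (1 / ε) * (∫ p in Set.Ioo (0:ℝ) ε ×ˢ B, f p) - I
      = (1 / ε) * ((∫ p in Set.Ioo (0:ℝ) ε ×ˢ B, f p) - ε * I) := by
    field_simp
  calc |(1 / ε) * (∫ p in Set.Ioo (0:ℝ) ε ×ˢ B, f p) - I|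
      = (1 / ε) * |(∫ p in Set.Ioo (0:ℝ) ε ×ˢ B, f p) - ε * I| := by
        rw [heq, abs_mul, abs_of_pos (by positivity : (0:ℝ) < 1/ε)]
    _ ≤ (1 / ε) * (δ' * (ε * C)) := by
        apply mul_le_mul_of_nonneg_left _ (by positivity)
        exact hkey
    _ = C * δ' := by field_simp
    _ < δ := by
        rw [hδ'_def]
        rw [mul_div_assoc']
        rw [div_lt_iff₀ (by linarith : (0:ℝ) < C + 1)]
        nlinarith
end

section
/- Let V, Q be Hilbert spaces, a: V×V → ℝ bounded, symmetric, and coercive on all of V with constant α, and b: V×Q → ℝ bounded with constant ‖b‖ and satisfying the inf-sup condition inf_{q∈Q} sup_{v∈V} b(v,q)/(‖v‖‖q‖) ≥ β > 0. Then for every (f,g) ∈ V'×Q' the saddle point problem a(u,v)+b(v,p) = f(v) ∀v, b(u,q) = g(q) ∀q has a unique solution (u,p) ∈ V×Q, with ‖u‖_V + ‖p‖_Q ≤ C(‖f‖_{V'} + ‖g‖_{Q'}) where C depends only on α, β, ‖a‖, ‖b‖. -/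
set_option maxHeartbeats 1600000

open InnerProductSpace RealInnerProductSpace

/-- Brezzi's theorem in the case where the symmetric bounded
bilinear form `a` is coercive on all of `V` and `b` is bounded and satisfies
the inf-sup condition with constant `β > 0`.  For every `(f,g) ∈ V' × Q'` the
saddle point problem has a unique solution `(u,p)`, with a stability bound
`‖u‖ + ‖p‖ ≤ C (‖f‖ + ‖g‖)` whose constant depends only on `α`, `β`, `‖a‖`,
`‖b‖` (and not on `f`, `g`). -/
theorem stmt7 {V Q : Type*}
    [NormedAddCommGroup V] [InnerProductSpace ℝ V] [CompleteSpace V]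
    [NormedAddCommGroup Q] [InnerProductSpace ℝ Q] [CompleteSpace Q]
    (a : V →ₗ[ℝ] V →ₗ[ℝ] ℝ) (b : V →ₗ[ℝ] Q →ₗ[ℝ] ℝ)
    (Ca Cb α β : ℝ) (hα : 0 < α) (hβ : 0 < β)
    (ha_bdd : ∀ u v : V, |a u v| ≤ Ca * ‖u‖ * ‖v‖)
    (ha_sym : ∀ u v : V, a u v = a v u)
    (ha_coer : ∀ v : V, α * ‖v‖ ^ 2 ≤ a v v)
    (hb_bdd : ∀ (v : V) (q : Q), |b v q| ≤ Cb * ‖v‖ * ‖q‖)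
    (hb_infsup : ∀ q : Q, β * ‖q‖ ≤ ⨆ v : {v : V // v ≠ 0}, b v.1 q / ‖v.1‖) :
    ∃ C > (0 : ℝ), ∀ (f : V →L[ℝ] ℝ) (g : Q →L[ℝ] ℝ),
      (∃! up : V × Q,
        (∀ v : V, a up.1 v + b v up.2 = f v) ∧ (∀ q : Q, b up.1 q = g q))
      ∧ ∀ up : V × Q,
          ((∀ v : V, a up.1 v + b v up.2 = f v) ∧ (∀ q : Q, b up.1 q = g q)) →
          ‖up.1‖ + ‖up.2‖ ≤ C * (‖f‖ + ‖g‖) := by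
  classical
  by_cases hV : Subsingleton V
  · -- degenerate case: V (hence Q) is trivial
    have hQsub : ∀ q : Q, q = 0 := by
      intro q
      have hEmp : IsEmpty {v : V // v ≠ 0} := ⟨fun v => v.2 (Subsingleton.elim _ _)⟩
      have h := hb_infsup q
      rw [Real.iSup_of_isEmpty] at h
      have hq : ‖q‖ ≤ 0 := by nlinarith [norm_nonneg q]
      simpa [norm_le_zero_iff] using hq
    refine ⟨1, one_pos, fun f g => ?_⟩
    have hsol : (∀ v : V, a ((0:V×Q).1) v + b v ((0:V×Q).2) = f v) ∧
        (∀ q : Q, b ((0:V×Q).1) q = g q) := by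
      constructor
      · intro v
        have hv : v = (0:V) := Subsingleton.elim v 0
        subst hv; simp
      · intro q
        have hq : q = 0 := hQsub q
        subst hq; simp
    constructor
    · refine ⟨0, hsol, ?_⟩
      rintro ⟨u', p'⟩ _
      have h1 : u' = 0 := Subsingleton.elim _ _
      have h2 : p' = 0 := hQsub _
      simp [h1, h2, Prod.ext_iff]
    · rintro ⟨u', p'⟩ _
      have h1 : u' = 0 := Subsingleton.elim _ _
      have h2 : p' = 0 := hQsub _
      simp only [h1, h2, norm_zero, add_zero, one_mul]
      positivity
  · rw [not_subsingleton_iff_nontrivial] at hV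
    obtain ⟨v₀, hv₀⟩ := exists_ne (0 : V)
    have hv₀n : 0 < ‖v₀‖ := norm_pos_iff.mpr hv₀
    have hCa : 0 < Ca := by
      have h1 := ha_coer v₀
      have h3 : a v₀ v₀ ≤ Ca * ‖v₀‖ * ‖v₀‖ := (le_abs_self _).trans (ha_bdd v₀ v₀)
      have hsq : ‖v₀‖ ^ 2 = ‖v₀‖ * ‖v₀‖ := sq ‖v₀‖
      nlinarith [mul_pos hv₀n hv₀n]
    set Cb' := max Cb 0 with hCb'def
    have hCb' : (0:ℝ) ≤ Cb' := le_max_right _ _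
    have hb_bdd' : ∀ (v : V) (q : Q), |b v q| ≤ Cb' * ‖v‖ * ‖q‖ := by
      intro v q
      refine (hb_bdd v q).trans ?_
      exact mul_le_mul_of_nonneg_right
        (mul_le_mul_of_nonneg_right (le_max_left _ _) (norm_nonneg _)) (norm_nonneg _)
    have haN : ∀ u v : V, ‖a u v‖ ≤ Ca * ‖u‖ * ‖v‖ := fun u v => by
      rw [Real.norm_eq_abs]; exact ha_bdd u v
    have hbN : ∀ (v : V) (q : Q), ‖b v q‖ ≤ Cb' * ‖v‖ * ‖q‖ := fun v q => by
      rw [Real.norm_eq_abs]; exact hb_bdd' v q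
    set acl : V →L[ℝ] V →L[ℝ] ℝ := a.mkContinuous₂ Ca haN with hacl
    set bcl : V →L[ℝ] Q →L[ℝ] ℝ := b.mkContinuous₂ Cb' hbN with hbcl
    have hcoer : IsCoercive acl := by
      refine ⟨α, hα, fun u => ?_⟩
      have h := ha_coer u
      show α * ‖u‖ * ‖u‖ ≤ a u u
      nlinarith
    set A := hcoer.continuousLinearEquivOfBilin with hAdef
    have hA : ∀ v w : V, ⟪A v, w⟫_ℝ = a v w := fun v w =>
      hcoer.continuousLinearEquivOfBilin_apply v w
    set Bop : V →L[ℝ] Q :=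
      ((toDual ℝ Q).symm.toContinuousLinearEquiv.toContinuousLinearMap).comp bcl with hBopdef
    have hB : ∀ (v : V) (q : Q), ⟪Bop v, q⟫_ℝ = b v q := by
      intro v q
      show ⟪(toDual ℝ Q).symm (bcl v), q⟫_ℝ = b v q
      rw [toDual_symm_apply]
      rfl
    set Bt := ContinuousLinearMap.adjoint Bop with hBtdef
    have hBt : ∀ (q : Q) (v : V), ⟪Bt q, v⟫_ℝ = b v q := by
      intro q v
      rw [hBtdef, ContinuousLinearMap.adjoint_inner_left, real_inner_comm]
      exact hB v q
    have hBt_lb : ∀ q : Q, β * ‖q‖ ≤ ‖Bt q‖ := by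
      intro q
      refine (hb_infsup q).trans (Real.iSup_le ?_ (norm_nonneg _))
      rintro ⟨v, hv⟩
      have hvpos : 0 < ‖v‖ := norm_pos_iff.mpr hv
      rw [div_le_iff₀ hvpos]
      calc b v q = ⟪Bt q, v⟫_ℝ := (hBt q v).symm
        _ ≤ ‖Bt q‖ * ‖v‖ := real_inner_le_norm _ _
    have hBt_ub : ∀ q : Q, ‖Bt q‖ ≤ Cb' * ‖q‖ := by
      intro q
      rcases eq_or_ne (Bt q) 0 with h | h
      · rw [h, norm_zero]; positivity
      · have hp : 0 < ‖Bt q‖ := norm_pos_iff.mpr h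
        have h1 : ‖Bt q‖ * ‖Bt q‖ = ⟪Bt q, Bt q⟫_ℝ := (real_inner_self_eq_norm_mul_norm _).symm
        have h2 : ⟪Bt q, Bt q⟫_ℝ = b (Bt q) q := hBt q (Bt q)
        have h3 := (le_abs_self (b (Bt q) q)).trans (hb_bdd' (Bt q) q)
        nlinarith
    have hBop_ub : ∀ v : V, ‖Bop v‖ ≤ Cb' * ‖v‖ := by
      intro v
      rcases eq_or_ne (Bop v) 0 with h | h
      · rw [h, norm_zero]; positivity
      · have hp : 0 < ‖Bop v‖ := norm_pos_iff.mpr h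
        have h1 : ‖Bop v‖ * ‖Bop v‖ = ⟪Bop v, Bop v⟫_ℝ := (real_inner_self_eq_norm_mul_norm _).symm
        have h2 : ⟪Bop v, Bop v⟫_ℝ = b v (Bop v) := hB v (Bop v)
        have h3 := (le_abs_self (b v (Bop v))).trans (hb_bdd' v (Bop v))
        nlinarith
    have hAv_ub : ∀ v : V, ‖A v‖ ≤ Ca * ‖v‖ := by
      intro v
      rcases eq_or_ne (A v) 0 with h | h
      · rw [h, norm_zero]; positivity
      · have hp : 0 < ‖A v‖ := norm_pos_iff.mpr h
        have h1 : ‖A v‖ * ‖A v‖ = ⟪A v, A v⟫_ℝ := (real_inner_self_eq_norm_mul_norm _).symm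
        have h2 : ⟪A v, A v⟫_ℝ = a v (A v) := hA v (A v)
        have h3 := (le_abs_self (a v (A v))).trans (ha_bdd v (A v))
        nlinarith
    have hA_lb : ∀ v : V, α * ‖v‖ ≤ ‖A v‖ := by
      intro v
      rcases eq_or_ne v 0 with rfl | h
      · simp
      · have hp : 0 < ‖v‖ := norm_pos_iff.mpr h
        have h1 := ha_coer v
        have h2 : a v v = ⟪A v, v⟫_ℝ := (hA v v).symm
        have h3 : ⟪A v, v⟫_ℝ ≤ ‖A v‖ * ‖v‖ := real_inner_le_norm _ _
        nlinarith
    have hAsymm_ub : ∀ w : V, ‖A.symm w‖ ≤ α⁻¹ * ‖w‖ := by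
      intro w
      have h1 := hA_lb (A.symm w)
      rw [A.apply_symm_apply] at h1
      calc ‖A.symm w‖ = α⁻¹ * (α * ‖A.symm w‖) := by field_simp
        _ ≤ α⁻¹ * ‖w‖ := mul_le_mul_of_nonneg_left h1 (by positivity)
    have hAsymm_coer : ∀ w : V, α / Ca ^ 2 * ‖w‖ ^ 2 ≤ ⟪A.symm w, w⟫_ℝ := by
      intro w
      have hwv : w = A (A.symm w) := (A.apply_symm_apply w).symm
      have h1 : ⟪A.symm w, w⟫_ℝ = a (A.symm w) (A.symm w) := by
        rw [real_inner_comm]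
        calc ⟪w, A.symm w⟫_ℝ = ⟪A (A.symm w), A.symm w⟫_ℝ := by rw [A.apply_symm_apply]
          _ = a (A.symm w) (A.symm w) := hA _ _
      have h2 := ha_coer (A.symm w)
      have hwub : ‖w‖ ≤ Ca * ‖A.symm w‖ := by
        conv_lhs => rw [hwv]
        exact hAv_ub _
      rw [h1]
      have h4 : ‖w‖ ^ 2 ≤ (Ca * ‖A.symm w‖) ^ 2 :=
        pow_le_pow_left₀ (norm_nonneg _) hwub 2
      have h5 : α / Ca ^ 2 * ‖w‖ ^ 2 ≤ α / Ca ^ 2 * (Ca * ‖A.symm w‖) ^ 2 :=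
        mul_le_mul_of_nonneg_left h4 (by positivity)
      have h6 : α / Ca ^ 2 * (Ca * ‖A.symm w‖) ^ 2 = α * ‖A.symm w‖ ^ 2 := by
        field_simp
      linarith
    -- the Schur complement bilinear form
    set clin : Q →ₗ[ℝ] Q →ₗ[ℝ] ℝ := LinearMap.mk₂ ℝ (fun q r => ⟪A.symm (Bt q), Bt r⟫_ℝ)
      (fun q q' r => by simp [map_add, inner_add_left])
      (fun c q r => by simp [map_smul, real_inner_smul_left])
      (fun q r r' => by simp [map_add, inner_add_right])
      (fun c q r => by simp [map_smul, real_inner_smul_right]) with hclin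
    have hclinN : ∀ q r : Q, ‖clin q r‖ ≤ (α⁻¹ * Cb' * Cb') * ‖q‖ * ‖r‖ := by
      intro q r
      have h1 : ‖clin q r‖ = |⟪A.symm (Bt q), Bt r⟫_ℝ| := rfl
      rw [h1]
      calc |⟪A.symm (Bt q), Bt r⟫_ℝ| ≤ ‖A.symm (Bt q)‖ * ‖Bt r‖ := abs_real_inner_le_norm _ _
        _ ≤ (α⁻¹ * (Cb' * ‖q‖)) * (Cb' * ‖r‖) := by
            apply mul_le_mul _ (hBt_ub r) (norm_nonneg _) (by positivity)
            exact (hAsymm_ub _).trans (mul_le_mul_of_nonneg_left (hBt_ub q) (by positivity))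
        _ = (α⁻¹ * Cb' * Cb') * ‖q‖ * ‖r‖ := by ring
    set ccl : Q →L[ℝ] Q →L[ℝ] ℝ := clin.mkContinuous₂ _ hclinN with hccl
    have hccl_coer : ∀ q : Q, α * β ^ 2 / Ca ^ 2 * ‖q‖ * ‖q‖ ≤ ccl q q := by
      intro q
      have h2 := hAsymm_coer (Bt q)
      have h3 := hBt_lb q
      have h4 : (β * ‖q‖) ^ 2 ≤ ‖Bt q‖ ^ 2 := pow_le_pow_left₀ (by positivity) h3 2
      show α * β ^ 2 / Ca ^ 2 * ‖q‖ * ‖q‖ ≤ ⟪A.symm (Bt q), Bt q⟫_ℝ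
      have h5 : α / Ca ^ 2 * (β * ‖q‖) ^ 2 ≤ α / Ca ^ 2 * ‖Bt q‖ ^ 2 :=
        mul_le_mul_of_nonneg_left h4 (by positivity)
      have h6 : α * β ^ 2 / Ca ^ 2 * ‖q‖ * ‖q‖ = α / Ca ^ 2 * (β * ‖q‖) ^ 2 := by ring
      linarith
    have hscoer : IsCoercive ccl := ⟨α * β ^ 2 / Ca ^ 2, by positivity, hccl_coer⟩
    set S := hscoer.continuousLinearEquivOfBilin with hSdef
    have hS : ∀ q r : Q, ⟪S q, r⟫_ℝ = ⟪A.symm (Bt q), Bt r⟫_ℝ := fun q r =>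
      hscoer.continuousLinearEquivOfBilin_apply q r
    have hSid : ∀ q : Q, S q = Bop (A.symm (Bt q)) := by
      intro q
      apply ext_inner_right ℝ
      intro r
      rw [hS, hB, real_inner_comm]
      exact hBt r _
    have hS_lb : ∀ q : Q, α * β ^ 2 / Ca ^ 2 * ‖q‖ ≤ ‖S q‖ := by
      intro q
      rcases eq_or_ne q 0 with rfl | h
      · simp
      · have hp : 0 < ‖q‖ := norm_pos_iff.mpr h
        have h1 := hccl_coer q
        have h2 : ccl q q = ⟪S q, q⟫_ℝ := (hS q q).symm
        have h3 : ⟪S q, q⟫_ℝ ≤ ‖S q‖ * ‖q‖ := real_inner_le_norm _ _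
        have h4 : α * β ^ 2 / Ca ^ 2 * ‖q‖ * ‖q‖ ≤ ‖S q‖ * ‖q‖ := by linarith
        exact le_of_mul_le_mul_right h4 hp
    set K := Ca ^ 2 / (α * β ^ 2) with hK
    have hKpos : 0 < K := by positivity
    have hSsymm_ub : ∀ w : Q, ‖S.symm w‖ ≤ K * ‖w‖ := by
      intro w
      have h1 := hS_lb (S.symm w)
      rw [S.apply_symm_apply] at h1
      calc ‖S.symm w‖ = K * (α * β ^ 2 / Ca ^ 2 * ‖S.symm w‖) := by
            rw [hK]; field_simp
        _ ≤ K * ‖w‖ := mul_le_mul_of_nonneg_left h1 hKpos.le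
    refine ⟨α⁻¹ + (α⁻¹ * Cb' + 1) * K * (α⁻¹ * Cb' + 1), by positivity, fun f g => ?_⟩
    set F := (toDual ℝ V).symm f with hFdef
    set G := (toDual ℝ Q).symm g with hGdef
    have hFa : ∀ v : V, ⟪F, v⟫_ℝ = f v := fun v => toDual_symm_apply
    have hGa : ∀ q : Q, ⟪G, q⟫_ℝ = g q := fun q => toDual_symm_apply
    have hFn : ‖F‖ = ‖f‖ := LinearIsometryEquiv.norm_map _ f
    have hGn : ‖G‖ = ‖g‖ := LinearIsometryEquiv.norm_map _ g
    set p := S.symm (Bop (A.symm F) - G) with hpdef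
    set u := A.symm (F - Bt p) with hudef
    have hAu : A u = F - Bt p := A.apply_symm_apply _
    have heq1 : ∀ v : V, a u v + b v p = f v := by
      intro v
      have h1 : a u v = ⟪A u, v⟫_ℝ := (hA u v).symm
      have h2 : b v p = ⟪Bt p, v⟫_ℝ := (hBt p v).symm
      rw [h1, h2, hAu, inner_sub_left, ← hFa v]
      ring
    have heq2 : ∀ q : Q, b u q = g q := by
      intro q
      have h1 : b u q = ⟪Bop u, q⟫_ℝ := (hB u q).symm
      have h2 : Bop u = G := by
        have h3 : Bop u = Bop (A.symm F) - Bop (A.symm (Bt p)) := by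
          rw [hudef, map_sub, map_sub]
        rw [h3, ← hSid p, hpdef, S.apply_symm_apply]
        abel
      rw [h1, h2, hGa]
    clear_value Cb' acl bcl A Bop Bt clin ccl S K F G p u
    have huniq : ∀ up : V × Q,
        ((∀ v : V, a up.1 v + b v up.2 = f v) ∧ (∀ q : Q, b up.1 q = g q)) → up = (u, p) := by
      rintro ⟨u', p'⟩ ⟨h1, h2⟩
      have hw1 : ∀ v : V, a (u' - u) v + b v (p' - p) = 0 := by
        intro v
        have e1 := h1 v
        have e2 := heq1 v
        simp only [map_sub, LinearMap.sub_apply]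
        linarith
      have hw2 : ∀ q : Q, b (u' - u) q = 0 := by
        intro q
        have e1 := h2 q
        have e2 := heq2 q
        simp only [map_sub, LinearMap.sub_apply]
        linarith
      have hw : u' = u := by
        have e1 := hw1 (u' - u)
        have e2 := hw2 (p' - p)
        have e3 : a (u' - u) (u' - u) = 0 := by linarith
        have e4 := ha_coer (u' - u)
        have e5 : α * ‖u' - u‖ ^ 2 ≤ α * 0 := by rw [mul_zero]; linarith
        have e6 : ‖u' - u‖ ^ 2 = 0 :=
          le_antisymm (le_of_mul_le_mul_left e5 hα) (by positivity)
        have e7 : u' - u = 0 := norm_eq_zero.mp (by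
          have := sq_eq_zero_iff.mp e6
          exact this)
        exact sub_eq_zero.mp e7
      have hr : p' = p := by
        have e5 : ∀ v : V, b v (p' - p) = 0 := by
          intro v
          have e6 := hw1 v
          have ha0 : a (u' - u) v = 0 := by rw [hw]; simp
          linarith
        have e6 : Bt (p' - p) = 0 := by
          have e7 : ⟪Bt (p' - p), Bt (p' - p)⟫_ℝ = 0 := by rw [hBt]; exact e5 _
          exact inner_self_eq_zero.mp e7
        have e8 := hBt_lb (p' - p)
        rw [e6, norm_zero] at e8
        have e9 : β * ‖p' - p‖ ≤ β * 0 := by rw [mul_zero]; linarith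
        have e10 : p' - p = 0 :=
          norm_le_zero_iff.mp (le_of_mul_le_mul_left e9 hβ)
        exact sub_eq_zero.mp e10
      simp [Prod.ext_iff, hw, hr]
    have hiCb : (0:ℝ) ≤ α⁻¹ * Cb' := by positivity
    have hbnd : ‖u‖ + ‖p‖ ≤
        (α⁻¹ + (α⁻¹ * Cb' + 1) * K * (α⁻¹ * Cb' + 1)) * (‖f‖ + ‖g‖) := by
      have hpB : ‖p‖ ≤ K * (α⁻¹ * Cb' * ‖f‖ + ‖g‖) := by
        have h2 : ‖Bop (A.symm F)‖ ≤ Cb' * (α⁻¹ * ‖F‖) :=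
          (hBop_ub _).trans (mul_le_mul_of_nonneg_left (hAsymm_ub F) hCb')
        have h1 : ‖Bop (A.symm F) - G‖ ≤ α⁻¹ * Cb' * ‖f‖ + ‖g‖ := by
          calc ‖Bop (A.symm F) - G‖ ≤ ‖Bop (A.symm F)‖ + ‖G‖ := norm_sub_le _ _
            _ ≤ Cb' * (α⁻¹ * ‖F‖) + ‖g‖ := by rw [hGn]; linarith
            _ = α⁻¹ * Cb' * ‖f‖ + ‖g‖ := by rw [hFn]; ring
        rw [hpdef]
        exact (hSsymm_ub _).trans (mul_le_mul_of_nonneg_left h1 hKpos.le)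
      have huB : ‖u‖ ≤ α⁻¹ * ‖f‖ + α⁻¹ * Cb' * ‖p‖ := by
        calc ‖u‖ ≤ α⁻¹ * ‖F - Bt p‖ := by rw [hudef]; exact hAsymm_ub _
          _ ≤ α⁻¹ * (‖F‖ + ‖Bt p‖) :=
              mul_le_mul_of_nonneg_left (norm_sub_le _ _) (by positivity)
          _ ≤ α⁻¹ * (‖f‖ + Cb' * ‖p‖) := by
              rw [hFn]
              exact mul_le_mul_of_nonneg_left (add_le_add le_rfl (hBt_ub p)) (by positivity)
          _ = α⁻¹ * ‖f‖ + α⁻¹ * Cb' * ‖p‖ := by ring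
      have e1 : α⁻¹ * Cb' * ‖f‖ + ‖g‖ ≤ (α⁻¹ * Cb' + 1) * (‖f‖ + ‖g‖) := by
        have h8 := mul_nonneg hiCb (norm_nonneg g)
        have h9 := norm_nonneg f
        linarith
      have e2 : ‖p‖ ≤ K * ((α⁻¹ * Cb' + 1) * (‖f‖ + ‖g‖)) :=
        hpB.trans (mul_le_mul_of_nonneg_left e1 hKpos.le)
      have e3 : (α⁻¹ * Cb' + 1) * ‖p‖ ≤
          (α⁻¹ * Cb' + 1) * (K * ((α⁻¹ * Cb' + 1) * (‖f‖ + ‖g‖))) :=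
        mul_le_mul_of_nonneg_left e2 (by positivity)
      have e4 : α⁻¹ * ‖f‖ ≤ α⁻¹ * (‖f‖ + ‖g‖) :=
        mul_le_mul_of_nonneg_left (by linarith [norm_nonneg g]) (by positivity)
      have e5 : α⁻¹ * Cb' * ‖p‖ + ‖p‖ ≤
          (α⁻¹ * Cb' + 1) * (K * ((α⁻¹ * Cb' + 1) * (‖f‖ + ‖g‖))) := by
        have h7 : α⁻¹ * Cb' * ‖p‖ + ‖p‖ = (α⁻¹ * Cb' + 1) * ‖p‖ := by ring
        rw [h7]; exact e3
      linarith [huB, e4, e5]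
    refine ⟨⟨(u, p), ⟨heq1, heq2⟩, huniq⟩, fun up h => ?_⟩
    have := huniq up h
    subst this
    exact hbnd
end

section
/- Let Ω_p ⊂ ℝⁿ be a bounded Lipschitz domain with Γ ⊂ ∂Ω_p and Dirichlet portion ∂Ω_{p,D} of positive measure, K > 0. Assume ∂_{n,ε}: H¹_{0,D}(Ω_p) → L²(Γ) is a bounded linear surjection with bounded right inverse E. Then for every f in the dual of √K·H¹_{0,D}(Ω_p) and h ∈ (1/√K)L²(Γ), the saddle problem: find (p_p, λ) ∈ √K H¹_{0,D}(Ω_p) × √K L²(Γ) with K(∇p_p,∇q)_{Ω_p} + K(λ, ∂_{n,ε}q)_Γ = f(q) ∀q and K(∂_{n,ε}p_p, w)_Γ = (h,w)_Γ ∀w, has a unique solution satisfying ‖p_p‖_{√K H¹} ≤ C(‖h‖²_{(1/√K)L²(Γ)} + ‖f‖²_{(1/√K)H^{-1}})^{1/2}, with C depending only on Ω_p, ‖∂_{n,ε}‖, ‖E‖ (not on K). -/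
open scoped RealInnerProductSpace

set_option maxHeartbeats 1000000 in
/-- well-posedness, uniformly in `K > 0`, of the primal Darcy
saddle problem with an `∂_{n,ε}`-constraint.  Here `V` plays the role of
`H¹_{0,D}(Ω_p)` (a Hilbert space; by Poincaré, since `|∂Ω_{p,D}| > 0`, the
gradient form `a(·,·) = (∇·,∇·)` is bounded and coercive on `V` with constants
depending only on `Ω_p`), `L` plays the role of `L²(Γ)`, and
`Dn : V → L` is the bounded surjective operator `∂_{n,ε}` with bounded right
inverse `E` (Assumption 1).  For every `f` in the dual of `√K·V` and every `h`
in `(1/√K)·L`, the problem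
`K a(p,q) + K (λ, Dn q) = f(q) ∀q`, `K (Dn p, w) = (h, w) ∀w`
has a unique solution `(p, λ) ∈ √K V × √K L`, with
`‖p‖_{√K V} ≤ C (‖h‖²_{(1/√K)L} + ‖f‖²_{(1/√K)V'})^{1/2}` where `C` depends
only on the coercivity/boundedness constants of `a`, `‖Dn‖` and `‖E‖`,
not on `K`. -/
theorem stmt8 {V L : Type*}
    [NormedAddCommGroup V] [InnerProductSpace ℝ V] [CompleteSpace V]
    [NormedAddCommGroup L] [InnerProductSpace ℝ L] [CompleteSpace L]
    (a : V →ₗ[ℝ] V →ₗ[ℝ] ℝ) (α : ℝ) (hα : 0 < α)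
    (ha_sym : ∀ u v : V, a u v = a v u)
    (ha_bdd : ∀ u v : V, |a u v| ≤ ‖u‖ * ‖v‖)
    (ha_coer : ∀ v : V, α * ‖v‖ ^ 2 ≤ a v v)
    (Dn : V →L[ℝ] L) (E : L →L[ℝ] V) (hDnE : ∀ w : L, Dn (E w) = w) :
    ∃ C > (0 : ℝ), ∀ K : ℝ, 0 < K → ∀ (f : V →L[ℝ] ℝ) (h : L),
      (∃! pl : V × L,
        (∀ q : V, K * a pl.1 q + K * ⟪pl.2, Dn q⟫ = f q)
          ∧ (∀ w : L, K * ⟪Dn pl.1, w⟫ = ⟪h, w⟫))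
      ∧ ∀ pl : V × L,
          ((∀ q : V, K * a pl.1 q + K * ⟪pl.2, Dn q⟫ = f q)
            ∧ (∀ w : L, K * ⟪Dn pl.1, w⟫ = ⟪h, w⟫)) →
          Real.sqrt K * ‖pl.1‖
            ≤ C * Real.sqrt ((1 / K) * ‖h‖ ^ 2 + (1 / K) * ‖f‖ ^ 2) := by
  -- the bounded bilinear form and Lax-Milgram on the kernel of Dn
  let B : V →L[ℝ] V →L[ℝ] ℝ := LinearMap.mkContinuous₂ a 1 (fun u v => by
    simpa using ha_bdd u v)
  have hBa : ∀ u v, B u v = a u v := fun _ _ => rfl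
  let W := LinearMap.ker (Dn : V →ₗ[ℝ] L)
  let ι := W.subtypeL
  let B0 : W →L[ℝ] W →L[ℝ] ℝ := ((B.comp ι).flip.comp ι).flip
  have hB0 : ∀ x y : W, B0 x y = a (x : V) (y : V) := fun x y => rfl
  have coer : IsCoercive B0 := by
    refine ⟨α, hα, fun u => ?_⟩
    rw [hB0]
    have h1 : ‖u‖ = ‖(u : V)‖ := rfl
    have := ha_coer (u : V)
    rw [h1]; nlinarith [norm_nonneg (u : V)]
  have solve : ∀ g : W →L[ℝ] ℝ, ∃ z : W, ∀ y : W, a (z : V) (y : V) = g y := by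
    intro g
    refine ⟨coer.continuousLinearEquivOfBilin.symm
      ((InnerProductSpace.toDual ℝ W).symm g), fun y => ?_⟩
    rw [← hB0, ← coer.continuousLinearEquivOfBilin_apply,
      ContinuousLinearEquiv.apply_symm_apply, InnerProductSpace.toDual_symm_apply]
  -- the constant
  have h1 : (0:ℝ) < 1 + 1/α := by
    have := one_div_pos.mpr hα; linarith
  have h2 : (0:ℝ) < ‖E‖ + 1 := by positivity
  refine ⟨Real.sqrt 2 * ((1 + 1/α) * (‖E‖ + 1)),
    mul_pos (by positivity) (mul_pos h1 h2), fun K hK f h => ?_⟩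
  have hK0 : K ≠ 0 := ne_of_gt hK
  have hKinv : (0:ℝ) < 1/K := by positivity
  have hiα : (0:ℝ) < 1/α := one_div_pos.mpr hα
  -- a priori bound on the first component of any solution
  have est : ∀ p : V, ∀ l : L,
      ((∀ q : V, K * a p q + K * ⟪l, Dn q⟫ = f q)
        ∧ (∀ w : L, K * ⟪Dn p, w⟫ = ⟪h, w⟫)) →
      ‖p‖ ≤ (1 + 1/α) * (‖E‖ + 1) * ((1/K) * (‖h‖ + ‖f‖)) := by
    intro p l ⟨heq1, heq2⟩
    -- Dn p = K⁻¹ • h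
    have hDnp : Dn p = K⁻¹ • h := by
      have key : ∀ w : L, ⟪Dn p - K⁻¹ • h, w⟫ = 0 := by
        intro w
        rw [inner_sub_left, real_inner_smul_left, ← heq2 w, ← mul_assoc,
          inv_mul_cancel₀ hK0, one_mul, sub_self]
      have := key (Dn p - K⁻¹ • h)
      rw [inner_self_eq_zero] at this
      exact sub_eq_zero.mp this
    set u : V := p - K⁻¹ • E h with hu
    have hDnu : u ∈ W := by
      rw [LinearMap.mem_ker]
      simp [hu, map_sub, map_smul, hDnE, hDnp]
    -- a p u = K⁻¹ * f u
    have hpu : a p u = K⁻¹ * f u := by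
      have := heq1 u
      have hDu : Dn u = 0 := hDnu
      rw [hDu, inner_zero_right, mul_zero, add_zero] at this
      field_simp
      linarith
    -- a u u
    have hauu : a u u = K⁻¹ * f u - K⁻¹ * a (E h) u := by
      have expand : a u = a p - K⁻¹ • a (E h) := by rw [hu]; simp [map_sub, map_smul]
      rw [expand, LinearMap.sub_apply, LinearMap.smul_apply, smul_eq_mul, hpu]
    have hfu : |f u| ≤ ‖f‖ * ‖u‖ := f.le_opNorm u
    have haEu : |a (E h) u| ≤ ‖E‖ * ‖h‖ * ‖u‖ := by
      calc |a (E h) u| ≤ ‖E h‖ * ‖u‖ := ha_bdd _ _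
        _ ≤ ‖E‖ * ‖h‖ * ‖u‖ :=
          mul_le_mul_of_nonneg_right (E.le_opNorm h) (norm_nonneg u)
    have hcu := ha_coer u
    have hnu : ‖u‖ ≤ (1/α) * (1/K) * (‖f‖ + ‖E‖ * ‖h‖) := by
      rcases eq_or_lt_of_le (norm_nonneg u) with h0 | h0
      · rw [← h0]
        exact mul_nonneg (mul_nonneg hiα.le hKinv.le) (by positivity)
      · have hK1 : (0:ℝ) < K⁻¹ := inv_pos.mpr hK
        have step : α * ‖u‖ ^ 2 ≤ K⁻¹ * (‖f‖ + ‖E‖ * ‖h‖) * ‖u‖ := by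
          have h3 : a u u ≤ K⁻¹ * (‖f‖ * ‖u‖) + K⁻¹ * (‖E‖ * ‖h‖ * ‖u‖) := by
            rw [hauu]
            have := abs_le.mp hfu
            have := abs_le.mp haEu
            nlinarith
          nlinarith
        have := (mul_le_mul_iff_of_pos_right h0).mp (by nlinarith : α * ‖u‖ * ‖u‖ ≤
          (K⁻¹ * (‖f‖ + ‖E‖ * ‖h‖)) * ‖u‖)
        calc ‖u‖ ≤ (K⁻¹ * (‖f‖ + ‖E‖ * ‖h‖)) / α := by
              rw [le_div_iff₀ hα]; linarith
          _ = (1/α) * (1/K) * (‖f‖ + ‖E‖ * ‖h‖) := by ring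
    have hp : ‖p‖ ≤ ‖u‖ + (1/K) * (‖E‖ * ‖h‖) := by
      have hpe : p = u + K⁻¹ • E h := by rw [hu]; abel
      rw [hpe]
      calc ‖u + K⁻¹ • E h‖ ≤ ‖u‖ + ‖K⁻¹ • E h‖ := norm_add_le _ _
        _ ≤ ‖u‖ + (1/K) * (‖E‖ * ‖h‖) := by
            rw [norm_smul, Real.norm_eq_abs, abs_of_pos (inv_pos.mpr hK), one_div]
            have h5 := E.le_opNorm h
            have hK1 : (0:ℝ) < K⁻¹ := inv_pos.mpr hK
            nlinarith [mul_le_mul_of_nonneg_left h5 hK1.le]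
    calc ‖p‖ ≤ ‖u‖ + (1/K) * (‖E‖ * ‖h‖) := hp
      _ ≤ (1/α) * (1/K) * (‖f‖ + ‖E‖ * ‖h‖) + (1/K) * (‖E‖ * ‖h‖) := by linarith
      _ = (1/K) * ((1/α) * (‖f‖ + ‖E‖ * ‖h‖) + ‖E‖ * ‖h‖) := by ring
      _ ≤ (1/K) * ((1 + 1/α) * (‖E‖ + 1) * (‖h‖ + ‖f‖)) := by
          refine mul_le_mul_of_nonneg_left ?_ hKinv.le
          have expand : (1 + 1/α) * (‖E‖ + 1) * (‖h‖ + ‖f‖)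
              = ((1/α) * (‖f‖ + ‖E‖ * ‖h‖) + ‖E‖ * ‖h‖)
                + (‖E‖ * ‖f‖ + ‖h‖ + ‖f‖ + (1/α) * ‖E‖ * ‖f‖ + (1/α) * ‖h‖) := by ring
          rw [expand]
          have t1 : (0:ℝ) ≤ ‖E‖ * ‖f‖ := by positivity
          have t2 : (0:ℝ) ≤ (1/α) * ‖E‖ * ‖f‖ :=
            mul_nonneg (mul_nonneg hiα.le (norm_nonneg _)) (norm_nonneg _)
          have t3 : (0:ℝ) ≤ (1/α) * ‖h‖ := mul_nonneg hiα.le (norm_nonneg _)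
          have t4 : (0:ℝ) ≤ ‖h‖ := norm_nonneg _
          have t5 : (0:ℝ) ≤ ‖f‖ := norm_nonneg _
          linarith
      _ = (1 + 1/α) * (‖E‖ + 1) * ((1/K) * (‖h‖ + ‖f‖)) := by ring
  refine ⟨?_, ?_⟩
  · -- existence and uniqueness
    set p₀ : V := K⁻¹ • E h with hp₀
    obtain ⟨z, hz⟩ := solve (((K⁻¹ • f) - B p₀).comp ι)
    have hz' : ∀ y : W, a (z : V) (y : V) = K⁻¹ * f (y : V) - a p₀ (y : V) := by
      intro y
      have := hz y
      simp [ContinuousLinearMap.comp_apply, ContinuousLinearMap.sub_apply,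
        ContinuousLinearMap.smul_apply, smul_eq_mul, hBa] at this; exact this
    set p : V := p₀ + (z : V) with hp
    set lam : L := (InnerProductSpace.toDual ℝ L).symm (((K⁻¹ • f) - B p).comp E) with hlam
    have hlam_inner : ∀ w : L, ⟪lam, w⟫ = K⁻¹ * f (E w) - a p (E w) := by
      intro w
      rw [hlam, InnerProductSpace.toDual_symm_apply]
      simp [ContinuousLinearMap.comp_apply, ContinuousLinearMap.sub_apply,
        ContinuousLinearMap.smul_apply, smul_eq_mul, hBa]
    have hz0 : Dn (z : V) = 0 := z.2
    have hDnp : Dn p = K⁻¹ • h := by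
      rw [hp, map_add, hz0, add_zero, hp₀, map_smul, hDnE]
    have eq2 : ∀ w : L, K * ⟪Dn p, w⟫ = ⟪h, w⟫ := by
      intro w
      rw [hDnp, real_inner_smul_left, ← mul_assoc, mul_inv_cancel₀ hK0, one_mul]
    have eq1 : ∀ q : V, K * a p q + K * ⟪lam, Dn q⟫ = f q := by
      intro q
      set q1 : V := E (Dn q) with hq1
      have hq0 : q - q1 ∈ W := by
        rw [LinearMap.mem_ker]
        simp [hq1, map_sub, hDnE]
      have key0 : a p (q - q1) = K⁻¹ * f (q - q1) := by
        have expand : a p (q - q1) = a p₀ (q - q1) + a (z : V) (q - q1) := by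
          rw [hp, map_add, LinearMap.add_apply]
        have := hz' ⟨q - q1, hq0⟩
        simp only [Submodule.coe_mk] at this
        rw [expand, this]; ring
      have key1 : ⟪lam, Dn q⟫ = K⁻¹ * f q1 - a p q1 := hlam_inner (Dn q)
      have hfq : f q = f (q - q1) + f q1 := by rw [← map_add]; congr 1; abel
      have hapq : a p q = a p (q - q1) + a p q1 := by rw [← map_add]; congr 1; abel
      have hKK : K * K⁻¹ = 1 := mul_inv_cancel₀ hK0
      rw [hapq, key0, key1, hfq]
      linear_combination (f (q - q1) + f q1) * hKK
    refine ⟨⟨p, lam⟩, ⟨eq1, eq2⟩, ?_⟩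
    rintro ⟨p', l'⟩ ⟨heq1', heq2'⟩
    simp only at heq1' heq2'
    have hDnd : Dn (p' - p) = 0 := by
      have key : ∀ w : L, ⟪Dn (p' - p), w⟫ = 0 := by
        intro w
        rw [map_sub, inner_sub_left]
        have hx : K * (⟪Dn p', w⟫ - ⟪Dn p, w⟫) = 0 := by
          rw [mul_sub]; rw [heq2' w, eq2 w]; ring
        rcases mul_eq_zero.mp hx with hc | hc
        · exact absurd hc hK0
        · linarith
      have := key (Dn (p' - p))
      rwa [inner_self_eq_zero] at this
    have hpd : p' = p := by
      have hd0 : a (p' - p) (p' - p) = 0 := by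
        have e1 := heq1' (p' - p)
        have e2 := eq1 (p' - p)
        rw [hDnd, inner_zero_right, mul_zero, add_zero] at e1 e2
        have expand : a (p' - p) (p' - p) = a p' (p' - p) - a p (p' - p) := by
          rw [map_sub, ha_sym (p' - p) p', ha_sym (p' - p) p]
        rw [expand]
        have hx : K * (a p' (p' - p) - a p (p' - p)) = 0 := by
          rw [mul_sub]; rw [e1, e2]; ring
        rcases mul_eq_zero.mp hx with hc | hc
        · exact absurd hc hK0
        · linarith
      have hc := ha_coer (p' - p)
      have hn2 : ‖p' - p‖ ^ 2 = 0 := by nlinarith [sq_nonneg ‖p' - p‖]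
      have := sq_eq_zero_iff.mp hn2
      rw [norm_eq_zero] at this
      exact sub_eq_zero.mp this
    have hld : l' = lam := by
      have key : ∀ w : L, ⟪l' - lam, w⟫ = 0 := by
        intro w
        have e1 := heq1' (E w)
        have e2 := eq1 (E w)
        rw [hpd] at e1
        rw [hDnE] at e1 e2
        rw [inner_sub_left]
        have hx : K * (⟪l', w⟫ - ⟪lam, w⟫) = 0 := by rw [mul_sub]; linarith
        rcases mul_eq_zero.mp hx with hc | hc
        · exact absurd hc hK0
        · linarith
      have := key (l' - lam)
      rwa [inner_self_eq_zero, sub_eq_zero] at this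
    exact Prod.ext hpd hld
  · -- the uniform estimate
    intro pl hpl
    have hest := est pl.1 pl.2 hpl
    have hsK : 0 < Real.sqrt K := Real.sqrt_pos.mpr hK
    have hs2 : Real.sqrt K * Real.sqrt K = K := Real.mul_self_sqrt hK.le
    have hC₁ : (0:ℝ) ≤ (1 + 1/α) * (‖E‖ + 1) := (mul_pos h1 h2).le
    have hsum : ‖h‖ + ‖f‖ ≤ Real.sqrt 2 * Real.sqrt (‖h‖^2 + ‖f‖^2) := by
      rw [← Real.sqrt_mul (by norm_num : (0:ℝ) ≤ 2)]
      have hrw : ‖h‖ + ‖f‖ = Real.sqrt ((‖h‖ + ‖f‖)^2) := (Real.sqrt_sq (by positivity)).symm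
      rw [hrw]
      apply Real.sqrt_le_sqrt
      nlinarith [sq_nonneg (‖h‖ - ‖f‖)]
    have hrhs : (1/K) * ‖h‖^2 + (1/K) * ‖f‖^2 = (‖h‖^2 + ‖f‖^2) / K := by ring
    calc Real.sqrt K * ‖pl.1‖
        ≤ Real.sqrt K * ((1 + 1/α) * (‖E‖ + 1) * ((1/K) * (‖h‖ + ‖f‖))) :=
          mul_le_mul_of_nonneg_left hest hsK.le
      _ = (1 + 1/α) * (‖E‖ + 1) * ((‖h‖ + ‖f‖) / Real.sqrt K) := by
          rw [← hs2]; field_simp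
          simp only [Real.sqrt_mul_self hsK.le, Real.sqrt_sq hsK.le]
      _ ≤ (1 + 1/α) * (‖E‖ + 1) *
            ((Real.sqrt 2 * Real.sqrt (‖h‖^2 + ‖f‖^2)) / Real.sqrt K) := by
          refine mul_le_mul_of_nonneg_left ?_ hC₁
          gcongr
      _ = Real.sqrt 2 * ((1 + 1/α) * (‖E‖ + 1)) *
            Real.sqrt ((1/K) * ‖h‖^2 + (1/K) * ‖f‖^2) := by
          rw [hrhs, Real.sqrt_div (by positivity) K]
          ring
end
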